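/- Let τ' > 0, let p/q be a rational in lowest terms with q ≥ 1, and let a, b ∈ ℝ. Assume G is holomorphic and bounded on the strip S(τ') = {z ∈ ℂ : |Im z| < τ'}, is 1-periodic, and vanishes, counting multiplicities, on the two sets {a + k·p/q : k ∈ ℤ} and {b + k·p/q : k ∈ ℤ} (i.e., G(z)/(sin(πq(z−a))·sin(πq(z−b))) is holomorphic on S(τ')). Then max_{x∈ℝ}|G(x)| ≤ (sup_{z∈S(τ')}|G(z)|) / (sinh(πqτ'))². In particular max_{x∈ℝ}|G(x)| = O(sup_{z∈S(τ')}|G(z)| · e^{−2πqτ'}) as q → ∞. -/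

import Mathlib

open Filter Real Set Topology

lemma aux_abs_sinh_le_norm_sin (w : ℂ) : |Real.sinh w.im| ≤ ‖Complex.sin w‖ := by
  have hw : Complex.sin w =
      ((Real.sin w.re * Real.cosh w.im : ℝ) : ℂ) +
        ((Real.cos w.re * Real.sinh w.im : ℝ) : ℂ) * Complex.I := by
    conv_lhs => rw [← Complex.re_add_im w]
    rw [Complex.sin_add, Complex.sin_mul_I, Complex.cos_mul_I, ← Complex.ofReal_sin,
      ← Complex.ofReal_cos, ← Complex.ofReal_sinh, ← Complex.ofReal_cosh]
    push_cast
    ring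
  have hre : (Complex.sin w).re = Real.sin w.re * Real.cosh w.im := by
    rw [hw]; simp [Complex.sin_ofReal_re, Complex.cos_ofReal_re, Complex.sinh_ofReal_re]
  have him : (Complex.sin w).im = Real.cos w.re * Real.sinh w.im := by
    rw [hw]; simp [Complex.sin_ofReal_re, Complex.cos_ofReal_re, Complex.sinh_ofReal_re]
  have hsq : ‖Complex.sin w‖ ^ 2 =
      (Real.sin w.re * Real.cosh w.im) ^ 2 + (Real.cos w.re * Real.sinh w.im) ^ 2 := by
    rw [← hre, ← him, Complex.sq_norm, Complex.normSq_apply]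
    ring
  have h1 := Real.sin_sq_add_cos_sq w.re
  have h2 := Real.cosh_sq w.im
  have h3 : Real.sinh w.im ^ 2 ≤ ‖Complex.sin w‖ ^ 2 := by nlinarith [sq_nonneg (Real.sin w.re * Real.sinh w.im)]
  nlinarith [norm_nonneg (Complex.sin w), abs_nonneg (Real.sinh w.im), sq_abs (Real.sinh w.im)]

lemma aux_sin_add_nat_mul_pi (z : ℂ) (n : ℕ) :
    Complex.sin (z + n * π) = (-1) ^ n * Complex.sin z := by
  induction n with
  | zero => simp
  | succ n ih =>
      have h : z + ((n + 1 : ℕ) : ℂ) * (π : ℂ) = (z + n * π) + π := by push_cast; ring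
      rw [h, Complex.sin_add_pi, ih]
      ring

/-- Lemma 6 of the paper: if `G` is holomorphic, bounded and `1`-periodic on the
strip `S(τ') = {|Im z| < τ'}` and vanishes, counting multiplicities, on the two
sets `{a + k p/q : k ∈ ℤ}` and `{b + k p/q : k ∈ ℤ}` (in the sense that
`G(z) / (sin(πq(z-a)) sin(πq(z-b)))` is holomorphic on `S(τ')`), then
`max_{x ∈ ℝ} |G(x)| ≤ sup_{S(τ')} |G| / sinh(πqτ')²`; in particular, when
`πqτ' > √(log 2)` one gets the bound `16 · sup_{S(τ')} |G| · e^{-2πqτ'}`. -/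
theorem sup_on_real_le_sup_on_strip_div_sinh_sq
    (τ' : ℝ) (hτ' : 0 < τ')
    (p : ℤ) (q : ℕ) (hq : 1 ≤ q) (hcop : Nat.Coprime p.natAbs q)
    (a b : ℝ) (G : ℂ → ℂ)
    (hGdiff : DifferentiableOn ℂ G {z : ℂ | |z.im| < τ'})
    (hGbdd : BddAbove ((fun z => ‖G z‖) '' {z : ℂ | |z.im| < τ'}))
    (hGper : ∀ z ∈ {z : ℂ | |z.im| < τ'}, G (z + 1) = G z)
    (hvanish : ∃ h : ℂ → ℂ, DifferentiableOn ℂ h {z : ℂ | |z.im| < τ'} ∧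
      ∀ z ∈ {z : ℂ | |z.im| < τ'},
        G z = h z * (Complex.sin ((π : ℂ) * (q : ℂ) * (z - (a : ℂ))) *
          Complex.sin ((π : ℂ) * (q : ℂ) * (z - (b : ℂ))))) :
    (∀ x : ℝ, ‖G (x : ℂ)‖ ≤
      sSup ((fun z => ‖G z‖) '' {z : ℂ | |z.im| < τ'}) / (Real.sinh (π * q * τ')) ^ 2)
    ∧ (Real.sqrt (Real.log 2) < π * q * τ' →
        ∀ x : ℝ, ‖G (x : ℂ)‖ ≤
          16 * sSup ((fun z => ‖G z‖) '' {z : ℂ | |z.im| < τ'}) *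
            Real.exp (-2 * π * q * τ')) := by
  obtain ⟨h, hhd, hhG⟩ := hvanish
  set U : Set ℂ := {z : ℂ | |z.im| < τ'} with hUdef
  set M : ℝ := sSup ((fun z => ‖G z‖) '' U) with hMdef
  have hmemU : ∀ z : ℂ, z ∈ U ↔ |z.im| < τ' := fun z => Iff.rfl
  have hq1 : (1 : ℝ) ≤ (q : ℝ) := by exact_mod_cast hq
  have hq0 : (0 : ℝ) < (q : ℝ) := lt_of_lt_of_le one_pos hq1
  have hpi := Real.pi_pos
  have hUopen : IsOpen U := by
    have : U = Complex.im ⁻¹' Ioo (-τ') τ' := by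
      ext z; simp [hmemU, abs_lt, mem_Ioo]
    rw [this]
    exact isOpen_Ioo.preimage Complex.continuous_im
  have hM0 : (0 : ℝ) ≤ M := by
    refine le_trans (norm_nonneg (G 0)) (le_csSup hGbdd ⟨0, ?_, rfl⟩)
    simp [hmemU, hτ']
  have hleM : ∀ z ∈ U, ‖G z‖ ≤ M := fun z hz => le_csSup hGbdd ⟨z, hz, rfl⟩
  set P : ℂ → ℂ := fun z => Complex.sin ((π : ℂ) * (q : ℂ) * (z - (a : ℂ))) *
      Complex.sin ((π : ℂ) * (q : ℂ) * (z - (b : ℂ))) with hPdef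
  have hGP : ∀ z ∈ U, G z = h z * P z := hhG
  have hPper : ∀ z : ℂ, P (z + 1) = P z := by
    intro z
    have h1 : (π : ℂ) * q * (z + 1 - a) = (π : ℂ) * q * (z - a) + q * π := by ring
    have h2 : (π : ℂ) * q * (z + 1 - b) = (π : ℂ) * q * (z - b) + q * π := by ring
    have h3 : ((-1 : ℂ) ^ q) * ((-1 : ℂ) ^ q) = 1 := by
      rw [← pow_add, ← two_mul, pow_mul]; norm_num
    calc P (z + 1)
        = ((-1) ^ q * Complex.sin ((π : ℂ) * q * (z - a))) *
          ((-1) ^ q * Complex.sin ((π : ℂ) * q * (z - b))) := by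
          rw [hPdef]; simp only [h1, h2, aux_sin_add_nat_mul_pi]
      _ = (((-1 : ℂ) ^ q) * ((-1 : ℂ) ^ q)) *
            (Complex.sin ((π : ℂ) * q * (z - a)) * Complex.sin ((π : ℂ) * q * (z - b))) := by
          ring
      _ = P z := by rw [h3, one_mul]
  have himARG : ∀ (c : ℝ) (z : ℂ), ((π : ℂ) * q * (z - c)).im = π * q * z.im := by
    intro c z
    simp [Complex.mul_im, Complex.mul_re]
  have hsinne : ∀ w : ℂ, w.im ≠ 0 → Complex.sin w ≠ 0 := by
    intro w hw hsin
    rcases Complex.sin_eq_zero_iff.mp hsin with ⟨k, hk⟩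
    apply hw
    rw [hk]
    simp
  have hPne : ∀ z : ℂ, z.im ≠ 0 → P z ≠ 0 := by
    intro z hz
    refine mul_ne_zero (hsinne _ ?_) (hsinne _ ?_) <;>
      · rw [himARG]
        exact mul_ne_zero (mul_ne_zero (ne_of_gt hpi) (ne_of_gt hq0)) hz
  -- `h` is 1-periodic on the strip
  have hUpre : IsPreconnected U := by
    have : U = Complex.imLm ⁻¹' Ioo (-τ') τ' := by
      ext z; simp [hmemU, abs_lt, mem_Ioo, Complex.imLm]
    rw [this]
    exact ((convex_Ioo _ _).linear_preimage Complex.imLm).isPreconnected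
  have hmaps : ∀ z ∈ U, z + 1 ∈ U := by
    intro z hz
    rw [hmemU] at hz ⊢
    simpa using hz
  have hh1 : AnalyticOnNhd ℂ h U := hhd.analyticOnNhd hUopen
  have hh2 : AnalyticOnNhd ℂ (fun z => h (z + 1)) U := by
    have : DifferentiableOn ℂ (fun z => h (z + 1)) U :=
      hhd.comp ((differentiable_id.add_const 1).differentiableOn) hmaps
    exact this.analyticOnNhd hUopen
  have hz₀mem : ((τ' / 2 : ℝ) : ℂ) * Complex.I ∈ U := by
    rw [hmemU]
    simp [abs_of_pos (half_pos hτ')]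
    linarith
  have heq : (fun z => h (z + 1)) =ᶠ[𝓝 (((τ' / 2 : ℝ) : ℂ) * Complex.I)] h := by
    have hopen : IsOpen ({z : ℂ | 0 < z.im} ∩ U) :=
      (isOpen_Ioi.preimage Complex.continuous_im).inter hUopen
    have hmem : ((τ' / 2 : ℝ) : ℂ) * Complex.I ∈ {z : ℂ | 0 < z.im} ∩ U := by
      refine ⟨?_, hz₀mem⟩
      simp [half_pos hτ']
    filter_upwards [hopen.mem_nhds hmem] with z hz
    obtain ⟨hz1, hz2⟩ := hz
    have hzim : z.im ≠ 0 := ne_of_gt hz1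
    have hz1' : z + 1 ∈ U := hmaps z hz2
    have hz1im : (z + 1).im ≠ 0 := by simpa using hzim
    have e1 : h z = G z / P z := (eq_div_iff (hPne z hzim)).mpr (hGP z hz2).symm
    have e2 : h (z + 1) = G (z + 1) / P (z + 1) :=
      (eq_div_iff (hPne _ hz1im)).mpr (hGP _ hz1').symm
    rw [e2, hGper z hz2, hPper, ← e1]
  have hper1 : ∀ z ∈ U, h (z + 1) = h z :=
    hh2.eqOn_of_preconnected_of_eventuallyEq hh1 hUpre hz₀mem heq
  have hshift : ∀ (n : ℤ) (z : ℂ), z ∈ U → h (z + n) = h z := by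
    intro n
    induction n using Int.induction_on with
    | zero => intro z hz; simp
    | succ k ih =>
        intro z hz
        have hzk : z + (k : ℂ) ∈ U := by
          rw [hmemU] at hz ⊢; simpa using hz
        have e : ((k + 1 : ℤ) : ℂ) = (k : ℂ) + 1 := by push_cast; ring
        rw [e, ← add_assoc, hper1 _ hzk]
        exact ih z hz
    | pred k ih =>
        intro z hz
        have hzk : z + ((-k - 1 : ℤ) : ℂ) ∈ U := by
          rw [hmemU] at hz ⊢; simpa using hz
        have e : z + ((-k : ℤ) : ℂ) = (z + ((-k - 1 : ℤ) : ℂ)) + 1 := by push_cast; ring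
        have := ih z hz
        rw [e, hper1 _ hzk] at this
        exact this
  -- main estimate for each τ'' < τ'
  have key : ∀ τ'' : ℝ, τ'' ∈ Ioo 0 τ' →
      ∀ x : ℝ, ‖G (x : ℂ)‖ ≤ M / (Real.sinh (π * q * τ'')) ^ 2 := by
    rintro τ'' ⟨hτ''0, hτ''lt⟩ x
    set s : ℝ := Real.sinh (π * q * τ'') with hsdef
    have hspos : 0 < s := Real.sinh_pos_iff.mpr (by positivity)
    -- bound for h on the closed substrip
    set K : Set ℂ := Icc (0 : ℝ) 1 ×ℂ Icc (-τ'') τ'' with hKdef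
    have hKsub : K ⊆ U := by
      intro z hz
      rw [Complex.mem_reProdIm] at hz
      rw [hmemU]
      rcases hz.2 with ⟨h1, h2⟩
      rw [abs_lt]
      constructor <;> linarith
    have hKcpt : IsCompact K :=
      Metric.isCompact_of_isClosed_isBounded (isClosed_Icc.reProdIm isClosed_Icc)
        ((Metric.isBounded_Icc (0:ℝ) 1).reProdIm (Metric.isBounded_Icc (-τ'') τ''))
    obtain ⟨C₀, hC₀⟩ := hKcpt.exists_bound_of_continuousOn (hhd.continuousOn.mono hKsub)
    have hhbdd : ∀ z : ℂ, |z.im| ≤ τ'' → ‖h z‖ ≤ C₀ := by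
      intro z hz
      have hzU : z ∈ U := by rw [hmemU]; exact lt_of_le_of_lt hz hτ''lt
      have hwU : z - ((⌊z.re⌋ : ℤ) : ℂ) ∈ U := by
        rw [hmemU]
        simpa using lt_of_le_of_lt hz hτ''lt
      have hwK : z - ((⌊z.re⌋ : ℤ) : ℂ) ∈ K := by
        rw [Complex.mem_reProdIm]
        constructor
        · simp only [Complex.sub_re, Complex.intCast_re]
          exact ⟨by linarith [Int.floor_le z.re], by linarith [Int.lt_floor_add_one z.re]⟩
        · simp only [Complex.sub_im, Complex.intCast_im, sub_zero]
          exact abs_le.mp hz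
      have hzw : h z = h (z - ((⌊z.re⌋ : ℤ) : ℂ)) := by
        have := hshift ⌊z.re⌋ (z - ((⌊z.re⌋ : ℤ) : ℂ)) hwU
        simpa using this
      rw [hzw]
      exact hC₀ _ hwK
    -- Phragmén–Lindelöf
    have hstrip : ∀ z : ℂ, -τ'' ≤ z.im → z.im ≤ τ'' → ‖h z‖ ≤ M / s ^ 2 := by
      intro z hz1 hz2
      have hbound : ∀ w : ℂ, |w.im| = τ'' → ‖h w‖ ≤ M / s ^ 2 := by
        intro w hw
        have hwU : w ∈ U := by rw [hmemU, hw]; exact hτ''lt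
        have hsinA : s ≤ ‖Complex.sin ((π : ℂ) * q * (w - (a : ℂ)))‖ := by
          refine le_trans ?_ (aux_abs_sinh_le_norm_sin _)
          rw [himARG]
          rcases abs_cases w.im with ⟨h1, _⟩ | ⟨h1, _⟩
          · rw [h1] at hw; rw [hw, abs_of_pos hspos]
          · have hwim : w.im = -τ'' := by rw [← hw, h1, neg_neg]
            rw [hwim]
            rw [show π * (q : ℝ) * -τ'' = -(π * q * τ'') by ring, Real.sinh_neg, abs_neg,
              abs_of_pos hspos]
        have hsinB : s ≤ ‖Complex.sin ((π : ℂ) * q * (w - (b : ℂ)))‖ := by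
          refine le_trans ?_ (aux_abs_sinh_le_norm_sin _)
          rw [himARG]
          rcases abs_cases w.im with ⟨h1, _⟩ | ⟨h1, _⟩
          · rw [h1] at hw; rw [hw, abs_of_pos hspos]
          · have hwim : w.im = -τ'' := by rw [← hw, h1, neg_neg]
            rw [hwim]
            rw [show π * (q : ℝ) * -τ'' = -(π * q * τ'') by ring, Real.sinh_neg, abs_neg,
              abs_of_pos hspos]
        have hPw : s ^ 2 ≤ ‖P w‖ := by
          rw [hPdef]
          simp only [norm_mul]
          calc s ^ 2 = s * s := sq s
            _ ≤ _ := mul_le_mul hsinA hsinB hspos.le (norm_nonneg _)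
        rw [le_div_iff₀ (pow_pos hspos 2)]
        calc ‖h w‖ * s ^ 2 ≤ ‖h w‖ * ‖P w‖ :=
              mul_le_mul_of_nonneg_left hPw (norm_nonneg _)
          _ = ‖G w‖ := by rw [hGP w hwU]; exact (norm_mul _ _).symm
          _ ≤ M := hleM w hwU
      refine PhragmenLindelof.horizontal_strip (a := -τ'') (b := τ'') ?_ ?_ ?_ ?_ hz1 hz2
      · constructor
        · refine hhd.mono ?_
          intro w hw
          rw [hmemU, abs_lt]
          exact ⟨by linarith [hw.1], by linarith [hw.2]⟩
        · refine hhd.continuousOn.mono ?_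
          refine subset_trans (Complex.continuous_im.closure_preimage_subset _) ?_
          intro w hw
          rw [closure_Ioo (by linarith : -τ'' ≠ τ'')] at hw
          rw [hmemU, abs_lt]
          exact ⟨lt_of_lt_of_le (by linarith) hw.1, lt_of_le_of_lt hw.2 hτ''lt⟩
      · refine ⟨0, div_pos hpi (by linarith), 0, ?_⟩
        rw [Asymptotics.isBigO_iff]
        refine ⟨C₀, ?_⟩
        rw [Filter.eventually_inf_principal]
        refine Filter.Eventually.of_forall fun w hw => ?_
        simp only [zero_mul, Real.exp_zero, norm_one, mul_one]
        exact hhbdd w (abs_le.mpr ⟨hw.1.le, hw.2.le⟩)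
      · intro w hw
        exact hbound w (by rw [hw, abs_neg, abs_of_pos hτ''0])
      · intro w hw
        exact hbound w (by rw [hw, abs_of_pos hτ''0])
    have hx := hstrip (x : ℂ) (by simp [hτ''0.le]) (by simp [hτ''0.le])
    have hPx : ‖P (x : ℂ)‖ ≤ 1 := by
      have e1 : (π : ℂ) * q * ((x : ℂ) - a) = ((π * q * (x - a) : ℝ) : ℂ) := by push_cast; ring
      have e2 : (π : ℂ) * q * ((x : ℂ) - b) = ((π * q * (x - b) : ℝ) : ℂ) := by push_cast; ring
      rw [hPdef]
      simp only [e1, e2, norm_mul, ← Complex.ofReal_sin, Complex.norm_real, Real.norm_eq_abs]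
      have t1 : |Real.sin (π * q * (x - a))| ≤ 1 :=
        abs_le.mpr ⟨Real.neg_one_le_sin _, Real.sin_le_one _⟩
      have t2 : |Real.sin (π * q * (x - b))| ≤ 1 :=
        abs_le.mpr ⟨Real.neg_one_le_sin _, Real.sin_le_one _⟩
      calc |Real.sin (π * q * (x - a))| * |Real.sin (π * q * (x - b))| ≤ 1 * 1 :=
            mul_le_mul t1 t2 (abs_nonneg _) zero_le_one
        _ = 1 := one_mul 1
    have hxU : (x : ℂ) ∈ U := by rw [hmemU]; simpa using hτ'
    calc ‖G (x : ℂ)‖ = ‖h (x : ℂ)‖ * ‖P (x : ℂ)‖ := by rw [hGP _ hxU, norm_mul]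
      _ ≤ (M / s ^ 2) * 1 :=
          mul_le_mul hx hPx (norm_nonneg _) (div_nonneg hM0 (sq_nonneg _))
      _ = M / s ^ 2 := mul_one _
  -- pass to the limit τ'' → τ'
  have main : ∀ x : ℝ, ‖G (x : ℂ)‖ ≤ M / (Real.sinh (π * q * τ')) ^ 2 := by
    intro x
    have hne : (𝓝[<] τ').NeBot := nhdsLT_neBot τ'
    have htend : Tendsto (fun t : ℝ => M / (Real.sinh (π * q * t)) ^ 2) (𝓝[<] τ')
        (𝓝 (M / (Real.sinh (π * q * τ')) ^ 2)) := by
      have hden : Real.sinh (π * q * τ') ^ 2 ≠ 0 := by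
        have : 0 < Real.sinh (π * q * τ') := Real.sinh_pos_iff.mpr (by positivity)
        positivity
      have hcont : Tendsto (fun t : ℝ => M / (Real.sinh (π * q * t)) ^ 2) (𝓝 τ')
          (𝓝 (M / (Real.sinh (π * q * τ')) ^ 2)) := by
        refine Tendsto.div tendsto_const_nhds ?_ hden
        exact ((Real.continuous_sinh.comp (continuous_const.mul continuous_id)).pow 2).tendsto τ'
      exact hcont.mono_left nhdsWithin_le_nhds
    refine ge_of_tendsto htend ?_
    have hIoo : Ioo 0 τ' ∈ 𝓝[<] τ' := by
      rw [mem_nhdsWithin]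
      exact ⟨Ioi 0, isOpen_Ioi, hτ', fun t ht => ⟨ht.1, ht.2⟩⟩
    filter_upwards [hIoo] with t ht
    exact key t ht x
  refine ⟨main, ?_⟩
  intro ht x
  set t : ℝ := π * q * τ' with htdef
  have ht0 : 0 < t := by positivity
  have hlog1 : Real.log 2 ≤ 1 := by
    have := Real.log_le_sub_one_of_pos (by norm_num : (0:ℝ) < 2)
    linarith
  have hlog0 : 0 ≤ Real.log 2 := Real.log_nonneg (by norm_num)
  have hsq : Real.log 2 ≤ Real.sqrt (Real.log 2) := by
    have h1 := Real.sq_sqrt hlog0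
    have h2 := Real.sqrt_nonneg (Real.log 2)
    nlinarith
  have hlogt : Real.log 2 ≤ 2 * t := by
    have : Real.log 2 < t := lt_of_le_of_lt hsq ht
    linarith
  have hE2 : 2 ≤ Real.exp t * Real.exp t := by
    have h2 : Real.exp (Real.log 2) ≤ Real.exp (t + t) := Real.exp_le_exp.mpr (by linarith)
    rw [Real.exp_log (by norm_num : (0:ℝ) < 2), Real.exp_add] at h2
    exact h2
  have hEpos : 0 < Real.exp t := Real.exp_pos t
  have hsinh : Real.exp t / 4 ≤ Real.sinh t := by
    rw [Real.sinh_eq, Real.exp_neg]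
    have hinv := mul_inv_cancel₀ (ne_of_gt hEpos)
    nlinarith [inv_pos.mpr hEpos]
  have hsinhpos : 0 < Real.sinh t := Real.sinh_pos_iff.mpr ht0
  have hsq4 : Real.exp t * Real.exp t / 16 ≤ Real.sinh t ^ 2 := by nlinarith
  have hfinal : M / Real.sinh t ^ 2 ≤ 16 * M * Real.exp (-2 * π * q * τ') := by
    have he : Real.exp (-2 * π * q * τ') = (Real.exp t * Real.exp t)⁻¹ := by
      rw [← Real.exp_add, ← Real.exp_neg]
      congr 1
      rw [htdef]; ring
    have h1 : M / Real.sinh t ^ 2 ≤ M / (Real.exp t * Real.exp t / 16) := by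
      gcongr
      all_goals first
        | exact hM0
        | positivity
        | exact hsq4
    rw [he]
    calc M / Real.sinh t ^ 2 ≤ M / (Real.exp t * Real.exp t / 16) := h1
      _ = 16 * M * (Real.exp t * Real.exp t)⁻¹ := by
          rw [div_div_eq_mul_div, div_eq_mul_inv]
          ring
  exact le_trans (main x) hfinal
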